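/- In the high-transfer-price setting, suppose additionally that Δp* ≤ p^∨ − p̄ (i.e. the maximising share ((τ₂−τ₁)/((1−exp(−λ))·(1+z)·τ₂·(1+1/γ)))^γ is at most 1). Then the expected-net-profit function E is strictly concave on [p̄, p^∨], its derivative vanishes at p* = p̄ + Δp*, and p* is the unique maximiser of E on the interval [p̄, p^∨]. -/

import Mathlib

open Real Set Filter Topology

set_option maxHeartbeats 1600000 in
/-- In the high-transfer-price setting, if the optimal price gap `Δp*` is at most
`p^∨ − p̄`, then the expected-net-profit function `E` is strictly concave on `[p̄, p^∨]`,
its derivative vanishes at `p* = p̄ + Δp*`, and `p*` is the unique maximiser of `E`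
on `[p̄, p^∨]`. -/
theorem stmt0 (τ₁ τ₂ lam z γ pbar pvee m K : ℝ)
    (hτ₁ : 0 ≤ τ₁) (hτ₂ : τ₂ ≤ 1) (hττ : τ₁ < τ₂)
    (hlam : 0 < lam) (hz : 0 < z) (hγ : γ ∈ Set.Ioc (0 : ℝ) 1)
    (hp : pbar < pvee) (hm : 0 < m)
    (Δp : ℝ)
    (hΔp : Δp = ((τ₂ - τ₁) / ((1 - Real.exp (-lam)) * (1 + z) * τ₂ * (1 + 1 / γ))) ^ γ *
      (pvee - pbar))
    (hle : Δp ≤ pvee - pbar)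
    (pstar : ℝ) (hpstar : pstar = pbar + Δp)
    (E : ℝ → ℝ)
    (hE : E = fun p => K + (τ₂ - τ₁) * m * p -
      (1 - Real.exp (-lam)) * (1 + z) * τ₂ * m * (p - pbar) *
        ((p - pbar) / (pvee - pbar)) ^ (1 / γ)) :
    StrictConcaveOn ℝ (Set.Icc pbar pvee) E ∧
    deriv E pstar = 0 ∧
    pstar ∈ Set.Icc pbar pvee ∧
    (∀ p ∈ Set.Icc pbar pvee, E p ≤ E pstar) ∧
    (∀ p ∈ Set.Icc pbar pvee, E p = E pstar → p = pstar) := by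
  obtain ⟨hγ0, hγ1⟩ := hγ
  set A := τ₂ - τ₁ with hAdef
  set B := (1 - Real.exp (-lam)) * (1 + z) * τ₂ with hBdef
  set L := pvee - pbar with hLdef
  set s := 1 + 1 / γ with hsdef
  have hA : 0 < A := by simp only [hAdef]; linarith
  have hτ₂0 : 0 < τ₂ := lt_of_le_of_lt hτ₁ hττ
  have hexp : Real.exp (-lam) < 1 := by
    rw [Real.exp_lt_one_iff]; linarith
  have hB : 0 < B := by
    have : 0 < 1 - Real.exp (-lam) := by linarith
    positivity
  have hL : 0 < L := by simp only [hLdef]; linarith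
  have hγinv : 0 < 1 / γ := by positivity
  have hs1 : 1 < s := by simp only [hsdef]; linarith
  have hs0 : 0 < s := lt_trans one_pos hs1
  have hLpow : 0 < L ^ (1 / γ) := Real.rpow_pos_of_pos hL _
  set c := B * m / L ^ (1 / γ) with hcdef
  have hc : 0 < c := by positivity
  set F : ℝ → ℝ := fun p => K + A * m * p - c * (p - pbar) ^ s with hFdef
  -- E agrees with F on [pbar, ∞)
  have hEF : ∀ p : ℝ, pbar ≤ p → E p = F p := by
    intro p hpp
    have hnn : (0 : ℝ) ≤ p - pbar := by linarith
    have h1 : ((p - pbar) / L) ^ (1 / γ) = (p - pbar) ^ (1 / γ) / L ^ (1 / γ) :=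
      Real.div_rpow hnn hL.le (1 / γ)
    have h2 : (p - pbar) ^ s = (p - pbar) ^ (1 : ℝ) * (p - pbar) ^ (1 / γ) := by
      rw [hsdef, Real.rpow_add' hnn (by positivity)]
    simp only [hE, hFdef, h1, h2, Real.rpow_one]
    rw [hcdef]
    field_simp
  have hΔ : Δp = (A / (B * s)) ^ γ * L := by rw [hΔp]
  have hABs : 0 < A / (B * s) := by positivity
  have hΔpos : 0 < Δp := by
    rw [hΔ]; exact mul_pos (Real.rpow_pos_of_pos hABs _) hL
  have hps1 : pbar < pstar := by rw [hpstar]; linarith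
  have hps2 : pstar ≤ pvee := by rw [hpstar]; linarith
  have hs1' : s - 1 = 1 / γ := by rw [hsdef]; ring
  -- key identity
  have hkey : c * s * Δp ^ (s - 1) = A * m := by
    have h3 : Δp ^ (1 / γ) = (A / (B * s)) * L ^ (1 / γ) := by
      rw [hΔ, Real.mul_rpow (Real.rpow_pos_of_pos hABs _).le hL.le,
        ← Real.rpow_mul hABs.le, mul_one_div_cancel hγ0.ne', Real.rpow_one]
    rw [hs1', h3, hcdef]
    field_simp
  -- derivative of F
  have hF' : ∀ x : ℝ, HasDerivAt F (A * m - c * s * (x - pbar) ^ (s - 1)) x := by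
    intro x
    have h1 : HasDerivAt (fun p : ℝ => p - pbar) 1 x := (hasDerivAt_id x).sub_const pbar
    have h2 : HasDerivAt (fun p : ℝ => (p - pbar) ^ s) (s * (x - pbar) ^ (s - 1)) x := by
      have := (Real.hasDerivAt_rpow_const (x := x - pbar) (p := s) (Or.inr hs1.le)).comp x h1
      simpa [Function.comp_def] using this
    have h3 : HasDerivAt (fun p : ℝ => K + A * m * p) (A * m) x := by
      simpa using ((hasDerivAt_id x).const_mul (A * m)).const_add K
    have := h3.sub (h2.const_mul c)
    refine this.congr_deriv ?_
    ring
  -- E eventually equals F near points above pbar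
  have hnhds : ∀ x : ℝ, pbar < x → E =ᶠ[nhds x] F := by
    intro x hx
    filter_upwards [Ioi_mem_nhds hx] with p hp
    exact hEF p (le_of_lt hp)
  have hderivE : ∀ x : ℝ, pbar < x → deriv E x = A * m - c * s * (x - pbar) ^ (s - 1) := by
    intro x hx
    rw [(hnhds x hx).deriv_eq, (hF' x).deriv]
  have hderiv0 : deriv E pstar = 0 := by
    rw [hderivE pstar hps1, hpstar]
    have : pbar + Δp - pbar = Δp := by ring
    rw [this, hkey]
    ring
  -- continuity of F
  have hFc : Continuous F := by
    have : Continuous fun p : ℝ => (p - pbar) ^ s :=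
      (continuous_id.sub continuous_const).rpow_const (fun x => Or.inr hs0.le)
    exact (continuous_const.add (continuous_const.mul continuous_id)).sub (continuous_const.mul this)
  have hEc : ∀ a b : ℝ, pbar ≤ a → ContinuousOn E (Icc a b) := by
    intro a b ha
    exact hFc.continuousOn.congr fun p hp => hEF p (le_trans ha hp.1)
  -- monotone on [pbar, pstar]
  have hmono : StrictMonoOn E (Icc pbar pstar) := by
    apply strictMonoOn_of_deriv_pos (convex_Icc _ _) (hEc _ _ le_rfl)
    intro x hx
    rw [interior_Icc] at hx
    rw [hderivE x hx.1]
    have hlt : (x - pbar) ^ (s - 1) < Δp ^ (s - 1) := by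
      apply Real.rpow_lt_rpow (by linarith [hx.1]) (by rw [hpstar] at hx; linarith [hx.2])
        (by rw [hs1']; exact hγinv)
    nlinarith [mul_lt_mul_of_pos_left hlt (mul_pos hc hs0)]
  -- antitone on [pstar, pvee]
  have hanti : StrictAntiOn E (Icc pstar pvee) := by
    apply strictAntiOn_of_deriv_neg (convex_Icc _ _) (hEc _ _ hps1.le)
    intro x hx
    rw [interior_Icc] at hx
    rw [hderivE x (lt_trans hps1 hx.1)]
    have hlt : Δp ^ (s - 1) < (x - pbar) ^ (s - 1) := by
      apply Real.rpow_lt_rpow hΔpos.le (by rw [hpstar] at hx; linarith [hx.1])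
        (by rw [hs1']; exact hγinv)
    nlinarith [mul_lt_mul_of_pos_left hlt (mul_pos hc hs0)]
  have hmem : pstar ∈ Icc pbar pvee := ⟨hps1.le, hps2⟩
  -- maximality
  have hmax : ∀ p ∈ Icc pbar pvee, p ≠ pstar → E p < E pstar := by
    intro p hpI hne
    rcases lt_or_gt_of_ne hne with h | h
    · exact hmono ⟨hpI.1, h.le⟩ ⟨hps1.le, le_rfl⟩ h
    · exact hanti ⟨le_rfl, hps2⟩ ⟨h.le, hpI.2⟩ h
  -- strict concavity
  have hconc : StrictConcaveOn ℝ (Icc pbar pvee) E := by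
    refine ⟨convex_Icc _ _, ?_⟩
    intro x hx y hy hxy a b ha hb hab
    have hz : a • x + b • y ∈ Icc pbar pvee :=
      (convex_Icc pbar pvee) hx hy ha.le hb.le hab
    have hxs : x - pbar ∈ Ici (0 : ℝ) := Set.mem_Ici.2 (by linarith [hx.1])
    have hys : y - pbar ∈ Ici (0 : ℝ) := Set.mem_Ici.2 (by linarith [hy.1])
    have hxy' : x - pbar ≠ y - pbar := by
      intro h
      exact hxy (by linarith)
    have hcv := (strictConvexOn_rpow hs1).2 hxs hys hxy' ha hb hab
    simp only [smul_eq_mul] at hcv hz ⊢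
    have harg : a * (x - pbar) + b * (y - pbar) = a * x + b * y - pbar := by
      linear_combination (-pbar) * hab
    rw [harg] at hcv
    rw [hEF x hx.1, hEF y hy.1, hEF _ hz.1]
    simp only [hFdef]
    have e1 : a * (K + A * m * x - c * (x - pbar) ^ s) + b * (K + A * m * y - c * (y - pbar) ^ s)
        = (a + b) * K + A * m * (a * x + b * y)
          - c * (a * (x - pbar) ^ s + b * (y - pbar) ^ s) := by ring
    rw [e1, hab, one_mul]
    have h5 := mul_lt_mul_of_pos_left hcv hc
    linarith
  refine ⟨hconc, hderiv0, hmem, ?_, ?_⟩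
  · intro p hpI
    rcases eq_or_ne p pstar with h | h
    · rw [h]
    · exact (hmax p hpI h).le
  · intro p hpI hEp
    by_contra h
    exact absurd hEp (ne_of_lt (hmax p hpI h))
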